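/- arXiv:1008.3131 — 3 statements merged into one kernel-verified Lean document; each statement's English description precedes it below -/
import Mathlib

section
/- Let ν be a finite positive Borel measure supported in the closed unit disk {z ∈ ℂ : |z| ≤ 1}. Then the following are equivalent: (i) lim_{|a|→1⁻, a ∈ 𝔻} ∫ (1 - |a|²)/|1 - conj(a)·ξ|² dν(ξ) = 0; (ii) ν(S(h, θ₀)) = o(h) uniformly in θ₀, i.e. for every ε > 0 there exists h₀ > 0 such that ν(S(h, θ₀)) ≤ ε·h for all 0 < h ≤ h₀ and all θ₀ ∈ [0, 2π). -/
open MeasureTheory Filter Metric Complex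

/-- The filter of points `a` of the open unit disk `𝔻` with `|a| → 1⁻`. -/
noncomputable def toBoundary : Filter ℂ :=
  Filter.comap (fun a : ℂ => ‖a‖) (nhdsWithin 1 (Set.Iio 1))

/-- The Carleson window `S(h, θ₀) = {r·e^{iθ} : 1 - h ≤ r ≤ 1, |θ - θ₀| ≤ h}`. -/
def carlesonWindow (h θ₀ : ℝ) : Set ℂ :=
  {z : ℂ | ∃ r θ : ℝ, 1 - h ≤ r ∧ r ≤ 1 ∧ |θ - θ₀| ≤ h ∧ z = r * Complex.exp (θ * Complex.I)}

section Helpers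

lemma carlesonWindow_mono {h₁ h₂ θ₀ : ℝ} (hle : h₁ ≤ h₂) :
    carlesonWindow h₁ θ₀ ⊆ carlesonWindow h₂ θ₀ := by
  rintro z ⟨r, θ, h1, h2, h3, rfl⟩
  exact ⟨r, θ, by linarith, h2, h3.trans hle, rfl⟩

lemma carlesonWindow_eq (h θ₀ : ℝ) : carlesonWindow h θ₀ =
    (fun p : ℝ × ℝ => (p.1 : ℂ) * Complex.exp (p.2 * Complex.I)) ''
      (Set.Icc (1-h) 1 ×ˢ Set.Icc (θ₀-h) (θ₀+h)) := by
  ext z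
  constructor
  · rintro ⟨r, θ, h1, h2, h3, rfl⟩
    rw [abs_sub_le_iff] at h3
    exact ⟨(r, θ), ⟨⟨h1, h2⟩, ⟨by linarith [h3.2], by linarith [h3.1]⟩⟩, rfl⟩
  · rintro ⟨⟨r, θ⟩, ⟨⟨h1, h2⟩, ⟨h3, h4⟩⟩, rfl⟩
    exact ⟨r, θ, h1, h2, abs_sub_le_iff.2 ⟨by linarith, by linarith⟩, rfl⟩

lemma carlesonWindow_isCompact (h θ₀ : ℝ) : IsCompact (carlesonWindow h θ₀) := by
  rw [carlesonWindow_eq]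
  exact (isCompact_Icc.prod isCompact_Icc).image (by continuity)

lemma carlesonWindow_measurableSet (h θ₀ : ℝ) : MeasurableSet (carlesonWindow h θ₀) :=
  (carlesonWindow_isCompact h θ₀).measurableSet

lemma abs_le_one_of_mem_window {h θ₀ : ℝ} (hh1 : h ≤ 1) {ξ : ℂ}
    (hξ : ξ ∈ carlesonWindow h θ₀) : ‖ξ‖ ≤ 1 := by
  obtain ⟨r, θ, h1, h2, _, rfl⟩ := hξ
  have hr0 : 0 ≤ r := by linarith
  simp [norm_mul, Complex.norm_exp_ofReal_mul_I, Complex.norm_real, _root_.abs_of_nonneg hr0]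
  exact h2

lemma abs_one_sub_mul_exp_sq (s t : ℝ) :
    ‖(1 - (s:ℂ) * Complex.exp ((t:ℂ) * Complex.I))‖ ^ 2
      = (1 - s)^2 + 2*s*(1 - Real.cos t) := by
  rw [Complex.sq_norm, Complex.normSq_apply]
  simp [Complex.exp_ofReal_mul_I_re, Complex.exp_ofReal_mul_I_im, Complex.mul_re, Complex.mul_im]
  nlinarith [Real.sin_sq_add_cos_sq t, sq_nonneg (Real.sin t), sq_nonneg s]

lemma conj_mul_rep (h θ₀ r θ : ℝ) :
    (starRingEnd ℂ) (((1-h:ℝ):ℂ) * Complex.exp ((θ₀:ℂ) * Complex.I)) *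
        ((r:ℂ) * Complex.exp ((θ:ℂ) * Complex.I))
      = (((1-h)*r : ℝ):ℂ) * Complex.exp (((θ-θ₀ : ℝ):ℂ) * Complex.I) := by
  have h1 : (starRingEnd ℂ) (Complex.exp ((θ₀:ℂ) * Complex.I))
      = Complex.exp (-((θ₀:ℂ) * Complex.I)) := by
    rw [← Complex.exp_conj]
    congr 1
    simp [Complex.conj_ofReal]
  rw [map_mul, h1, Complex.conj_ofReal,
    show (((θ - θ₀ : ℝ):ℂ)) * Complex.I = -((θ₀:ℂ) * Complex.I) + (θ:ℂ) * Complex.I by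
      push_cast; ring,
    Complex.exp_add]
  push_cast; ring

private lemma quad_lower {s t H cst : ℝ} (hπ : 3 < Real.pi)
    (h1c : 2*t^2 ≤ Real.pi^2 * (1 - cst)) (ht2 : H^2 ≤ t^2)
    (hs : 1/2 < s) (hs1 : s ≤ 1) :
    H^2 ≤ 4*Real.pi^2*((1-s)^2 + 2*s*(1 - cst)) := by
  have hX0 : 0 ≤ Real.pi^2 * (1 - cst) := by nlinarith [sq_nonneg t]
  have hprod : 0 ≤ (s - 1/2) * (Real.pi^2 * (1 - cst)) := mul_nonneg (by linarith) hX0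
  nlinarith [sq_nonneg (1-s), sq_nonneg Real.pi, hprod, h1c, ht2]

private lemma sqrt_step {A H : ℝ} (hπ : 3 < Real.pi) (hA0 : 0 ≤ A) (hH0 : 0 < H)
    (key : H^2 ≤ 4*Real.pi^2*A^2) : H ≤ A * (2*Real.pi) := by
  nlinarith [key, hA0, hH0, mul_nonneg hA0 (by linarith : (0:ℝ) ≤ Real.pi)]

lemma key_lower {h H θ₀ : ℝ} (hh0 : 0 < h) (hh1 : h ≤ 1) (hH0 : 0 < H) (hHπ : H ≤ Real.pi)
    {ξ : ℂ} (hξ : ‖ξ‖ ≤ 1) (hnot : ξ ∉ carlesonWindow H θ₀) :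
    H / (2 * Real.pi) ≤
      ‖(1 - (starRingEnd ℂ) (((1-h:ℝ):ℂ) * Complex.exp ((θ₀:ℂ) * Complex.I)) * ξ)‖ := by
  have hπ := Real.pi_gt_three
  set r := ‖ξ‖ with hr
  have hr0 : 0 ≤ r := norm_nonneg ξ
  set θ : ℝ := toIocMod Real.two_pi_pos (θ₀ - Real.pi) (Complex.arg ξ) with hθdef
  have hθmem := toIocMod_mem_Ioc Real.two_pi_pos (θ₀ - Real.pi) (Complex.arg ξ)
  rw [Set.mem_Ioc] at hθmem
  have hθabs : |θ - θ₀| ≤ Real.pi := by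
    rw [abs_le]
    constructor
    · linarith [hθmem.1]
    · linarith [hθmem.2]
  have hexp : Complex.exp ((θ:ℂ) * Complex.I) = Complex.exp ((Complex.arg ξ : ℂ) * Complex.I) := by
    have hsub := self_sub_toIocMod Real.two_pi_pos (θ₀ - Real.pi) (Complex.arg ξ)
    rw [zsmul_eq_mul] at hsub
    set n := toIocDiv Real.two_pi_pos (θ₀ - Real.pi) (Complex.arg ξ) with hn
    have harg : (Complex.arg ξ : ℝ) = θ + (n:ℝ)*(2*Real.pi) := by
      linarith [hsub]
    rw [harg]
    push_cast
    rw [add_mul, Complex.exp_add,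
      show ((n:ℂ)*(2*(Real.pi:ℂ)))*Complex.I = (n:ℂ)*(2*(Real.pi:ℂ)*Complex.I) by ring,
      Complex.exp_int_mul_two_pi_mul_I, mul_one]
  have hrep : ξ = (r:ℂ) * Complex.exp ((θ:ℂ) * Complex.I) := by
    rw [hexp]
    exact (Complex.norm_mul_exp_arg_mul_I ξ).symm
  have hcase : r < 1 - H ∨ H < |θ - θ₀| := by
    by_contra hc
    push_neg at hc
    exact hnot ⟨r, θ, hc.1, hξ, hc.2, hrep⟩
  rw [hrep, conj_mul_rep]
  set s := (1-h)*r with hs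
  have hs0 : 0 ≤ s := mul_nonneg (by linarith) hr0
  have hs1 : s ≤ 1 := by nlinarith
  have hsr : s ≤ r := by nlinarith
  set A := ‖(1 - (((1-h)*r : ℝ):ℂ) * Complex.exp (((θ-θ₀:ℝ):ℂ) * Complex.I))‖ with hA
  have hA0 : 0 ≤ A := norm_nonneg _
  have habsw : ‖((((1-h)*r : ℝ):ℂ) * Complex.exp (((θ-θ₀:ℝ):ℂ) * Complex.I))‖ = s := by
    rw [norm_mul, Complex.norm_real, Real.norm_eq_abs, Complex.norm_exp_ofReal_mul_I, mul_one, _root_.abs_of_nonneg hs0]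
  have hlb : 1 - s ≤ A := by
    have := norm_sub_norm_le 1 ((((1-h)*r : ℝ):ℂ) * Complex.exp (((θ-θ₀:ℝ):ℂ) * Complex.I))
    rwa [norm_one, habsw] at this
  rcases hcase with hcase | hcase
  · have h1 : H / (2*Real.pi) ≤ H := by
      apply div_le_self hH0.le
      linarith
    linarith
  · by_cases hshalf : s ≤ 1/2
    · have h1 : H / (2*Real.pi) ≤ 1/2 := by
        rw [div_le_iff₀ (by positivity)]
        linarith
      linarith
    · have hsq : A^2 = (1-s)^2 + 2*s*(1 - Real.cos (θ-θ₀)) := by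
        rw [hA]; exact abs_one_sub_mul_exp_sq s (θ-θ₀)
      have hπ2 : (0:ℝ) < Real.pi^2 := by positivity
      have hcos := Real.cos_le_one_sub_mul_cos_sq hθabs
      have h2 : Real.pi^2 * Real.cos (θ-θ₀) ≤ Real.pi^2 * (1 - 2/Real.pi^2 * (θ-θ₀)^2) :=
        mul_le_mul_of_nonneg_left hcos hπ2.le
      have h3 : Real.pi^2 * (1 - 2/Real.pi^2 * (θ-θ₀)^2) = Real.pi^2 - 2*(θ-θ₀)^2 := by
        field_simp
      have h1c : 2*(θ-θ₀)^2 ≤ Real.pi^2 * (1 - Real.cos (θ-θ₀)) := by nlinarith [h2, h3]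
      have ht2 : H^2 ≤ (θ-θ₀)^2 := by
        have h5 := mul_self_lt_mul_self hH0.le hcase
        have h6 := _root_.sq_abs (θ-θ₀)
        nlinarith [h5, h6]
      have key : H^2 ≤ 4*Real.pi^2*A^2 := by
        rw [hsq]
        exact quad_lower hπ h1c ht2 (by linarith) hs1
      rw [div_le_iff₀ (by positivity)]
      linarith [sqrt_step hπ hA0 hH0 key]
lemma key_upper {h θ₀ : ℝ} (hh0 : 0 < h) (hh1 : h ≤ 1)
    {ξ : ℂ} (hξ : ξ ∈ carlesonWindow h θ₀) :
    ‖(1 - (starRingEnd ℂ) (((1-h:ℝ):ℂ) * Complex.exp ((θ₀:ℂ) * Complex.I)) * ξ)‖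
      ≤ 4*h := by
  obtain ⟨r, θ, h1, h2, h3, rfl⟩ := hξ
  rw [conj_mul_rep]
  have hr0 : 0 ≤ r := by linarith
  have hs0 : 0 ≤ (1-h)*r := mul_nonneg (by linarith) hr0
  have hs1 : (1-h)*r ≤ 1 := by nlinarith
  have hsplit : (1:ℂ) - (((1-h)*r : ℝ):ℂ) * Complex.exp (((θ-θ₀:ℝ):ℂ)*Complex.I)
      = ((1-(1-h)*r : ℝ):ℂ)
        + (((1-h)*r : ℝ):ℂ) * (1 - Complex.exp (((θ-θ₀:ℝ):ℂ)*Complex.I)) := by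
    push_cast; ring
  rw [hsplit]
  have he : ‖(1 - Complex.exp (((θ-θ₀:ℝ):ℂ)*Complex.I))‖ ≤ 2*h := by
    rw [← norm_neg, neg_sub]
    have habs : ‖(((θ-θ₀:ℝ):ℂ) * Complex.I)‖ = |θ-θ₀| := by
      rw [norm_mul, Complex.norm_I, mul_one, Complex.norm_real, Real.norm_eq_abs]
    have := Complex.norm_exp_sub_one_le (x := ((θ-θ₀:ℝ):ℂ) * Complex.I)
      (by rw [habs]; linarith)
    rw [habs] at this
    linarith
  calc ‖(((1-(1-h)*r : ℝ):ℂ)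
        + (((1-h)*r : ℝ):ℂ) * (1 - Complex.exp (((θ-θ₀:ℝ):ℂ)*Complex.I)))‖
      ≤ ‖((1-(1-h)*r : ℝ):ℂ)‖
        + ‖((((1-h)*r : ℝ):ℂ) * (1 - Complex.exp (((θ-θ₀:ℝ):ℂ)*Complex.I)))‖ :=
        norm_add_le _ _
    _ ≤ 4*h := by
        rw [norm_mul, Complex.norm_real, Complex.norm_real, Real.norm_eq_abs, Real.norm_eq_abs,
          _root_.abs_of_nonneg hs0, _root_.abs_of_nonneg (by nlinarith : (0:ℝ) ≤ 1-(1-h)*r)]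
        nlinarith [he, norm_nonneg (1 - Complex.exp (((θ-θ₀:ℝ):ℂ)*Complex.I))]

lemma kernel_nonneg {a : ℂ} (ha : ‖a‖ ≤ 1) (ξ : ℂ) :
    0 ≤ (1 - ‖a‖ ^ 2) / ‖(1 - (starRingEnd ℂ) a * ξ)‖ ^ 2 :=
  div_nonneg (by nlinarith [norm_nonneg a]) (sq_nonneg _)

lemma ae_abs_le (ν : Measure ℂ) (hsupp : ν ((Metric.closedBall (0:ℂ) 1)ᶜ) = 0) :
    ∀ᵐ ξ ∂ν, ‖ξ‖ ≤ 1 := by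
  rw [ae_iff]
  rw [show {ξ : ℂ | ¬ ‖ξ‖ ≤ 1} = (Metric.closedBall (0:ℂ) 1)ᶜ from ?_]
  · exact hsupp
  · ext ξ
    simp [Metric.mem_closedBall, Complex.dist_eq]

lemma den_lb {a ξ : ℂ} (ha : ‖a‖ ≤ 1) (hξ : ‖ξ‖ ≤ 1) :
    1 - ‖a‖ ≤ ‖(1 - (starRingEnd ℂ) a * ξ)‖ := by
  have h := norm_sub_norm_le 1 ((starRingEnd ℂ) a * ξ)
  rw [norm_one, norm_mul, Complex.norm_conj] at h
  nlinarith [norm_nonneg a, norm_nonneg ξ]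

lemma kernel_integrable (ν : Measure ℂ) [IsFiniteMeasure ν]
    (hsupp : ν ((Metric.closedBall (0:ℂ) 1)ᶜ) = 0) {a : ℂ} (ha : ‖a‖ < 1) :
    Integrable (fun ξ => (1 - ‖a‖ ^ 2) / ‖(1 - (starRingEnd ℂ) a * ξ)‖ ^ 2) ν := by
  have hc : Continuous fun ξ : ℂ => ‖(1 - (starRingEnd ℂ) a * ξ)‖ ^ 2 := by
    apply Continuous.pow
    exact continuous_norm.comp (continuous_const.sub (continuous_const.mul continuous_id))
  apply Integrable.mono' (integrable_const ((1 - ‖a‖^2) / (1 - ‖a‖)^2))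
  · exact (measurable_const.div hc.measurable).aestronglyMeasurable
  · filter_upwards [ae_abs_le ν hsupp] with ξ hξ
    have hden := den_lb ha.le hξ
    have hnum : 0 ≤ 1 - ‖a‖ ^ 2 := by nlinarith [norm_nonneg a]
    rw [Real.norm_eq_abs, _root_.abs_of_nonneg (kernel_nonneg ha.le ξ)]
    exact div_le_div₀ hnum le_rfl (pow_pos (by linarith) 2) (pow_le_pow_left₀ (by linarith) hden 2)

set_option maxHeartbeats 1000000 in
private theorem shapiro_forward (ν : Measure ℂ) [IsFiniteMeasure ν]
    (hsupp : ν ((Metric.closedBall (0:ℂ) 1)ᶜ) = 0)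
    (htend : Filter.Tendsto
      (fun a : ℂ =>
        ∫ ξ, (1 - ‖a‖ ^ 2) / ‖(1 - (starRingEnd ℂ) a * ξ)‖ ^ 2 ∂ν)
      toBoundary (nhds 0)) :
    ∀ ε > 0, ∃ h₀ > 0, ∀ h : ℝ, 0 < h → h ≤ h₀ →
        ∀ θ₀ : ℝ, 0 ≤ θ₀ → θ₀ < 2 * Real.pi →
          ν (carlesonWindow h θ₀) ≤ ENNReal.ofReal (ε * h) := by
  intro ε hε
  have h16 : (0:ℝ) < ε/16 := by linarith
  have hev := Metric.tendsto_nhds.mp htend (ε/16) h16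
  rw [toBoundary, Filter.eventually_comap] at hev
  obtain ⟨b, hb, hsub⟩ := mem_nhdsLT_iff_exists_Ioo_subset' (show (0:ℝ) < 1 by norm_num) |>.1 hev
  have hb' : b < 1 := hb
  refine ⟨min ((1-b)/2) 1, lt_min (by linarith) one_pos, ?_⟩
  intro h hh0 hh1 θ₀ hθ₀0 hθ₀2
  have hble : h ≤ (1-b)/2 := le_trans hh1 (min_le_left _ _)
  have h1le : h ≤ 1 := le_trans hh1 (min_le_right _ _)
  set a : ℂ := ((1-h:ℝ):ℂ) * Complex.exp ((θ₀:ℂ) * Complex.I) with ha_def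
  have habs : ‖a‖ = 1 - h := by
    rw [ha_def, norm_mul, Complex.norm_real, Real.norm_eq_abs, Complex.norm_exp_ofReal_mul_I, mul_one,
      _root_.abs_of_nonneg (by linarith)]
  have hmem : ‖a‖ ∈ Set.Ioo b 1 := by
    rw [habs]
    constructor <;> [linarith; linarith]
  have hlt : dist (∫ ξ, (1 - ‖a‖ ^ 2) /
      ‖(1 - (starRingEnd ℂ) a * ξ)‖ ^ 2 ∂ν) 0 < ε/16 :=
    hsub hmem a rfl
  rw [Real.dist_0_eq_abs] at hlt
  have habslt : ‖a‖ < 1 := by rw [habs]; linarith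
  have hint := kernel_integrable ν hsupp habslt
  -- lower bound on the window
  have hlow : ∀ ξ ∈ carlesonWindow h θ₀,
      1/(16*h) ≤ (1 - ‖a‖ ^ 2) / ‖(1 - (starRingEnd ℂ) a * ξ)‖ ^ 2 := by
    intro ξ hξ
    have hup := key_upper hh0 h1le hξ
    have hden := den_lb habslt.le (abs_le_one_of_mem_window h1le hξ)
    rw [habs] at hden
    have hnum : h ≤ 1 - ‖a‖ ^ 2 := by rw [habs]; nlinarith
    have : h/(16*h^2) ≤ (1 - ‖a‖ ^ 2) / ‖(1 - (starRingEnd ℂ) a * ξ)‖ ^ 2 := by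
      apply div_le_div₀ (by linarith [hnum, hh0]) hnum (by nlinarith)
      calc ‖(1 - (starRingEnd ℂ) a * ξ)‖ ^ 2
          ≤ (4*h)^2 := by
            apply pow_le_pow_left₀ (norm_nonneg _)
            rw [ha_def]; exact hup
        _ = 16*h^2 := by ring
    calc (1:ℝ)/(16*h) = h/(16*h^2) := by field_simp
      _ ≤ _ := this
  have hfin : ν (carlesonWindow h θ₀) ≠ ⊤ := measure_ne_top ν _
  have hgoal := setIntegral_ge_of_const_le (carlesonWindow_measurableSet h θ₀) hfin hlow
    hint.integrableOn
  have hle2 : ∫ ξ in carlesonWindow h θ₀,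
        (1 - ‖a‖ ^ 2) / ‖(1 - (starRingEnd ℂ) a * ξ)‖ ^ 2 ∂ν
      ≤ ∫ ξ, (1 - ‖a‖ ^ 2) / ‖(1 - (starRingEnd ℂ) a * ξ)‖ ^ 2 ∂ν :=
    setIntegral_le_integral hint (Filter.Eventually.of_forall (kernel_nonneg habslt.le))
  have habsle : |∫ ξ, (1 - ‖a‖ ^ 2) / ‖(1 - (starRingEnd ℂ) a * ξ)‖ ^ 2 ∂ν|
      = ∫ ξ, (1 - ‖a‖ ^ 2) / ‖(1 - (starRingEnd ℂ) a * ξ)‖ ^ 2 ∂ν :=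
    _root_.abs_of_nonneg (integral_nonneg (kernel_nonneg habslt.le))
  rw [habsle] at hlt
  have hT : (ν (carlesonWindow h θ₀)).toReal ≤ ε * h := by
    have hchain : 1/(16*h) * (ν (carlesonWindow h θ₀)).toReal < ε/16 :=
      lt_of_le_of_lt (by have := hgoal.trans hle2; rwa [smul_eq_mul, measureReal_def, mul_comm] at this) hlt
    have heq : 1/(16*h) * (ν (carlesonWindow h θ₀)).toReal
        = (ν (carlesonWindow h θ₀)).toReal / (16*h) := by ring
    rw [heq, div_lt_iff₀ (by linarith : (0:ℝ) < 16*h)] at hchain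
    nlinarith [hchain]
  calc ν (carlesonWindow h θ₀) = ENNReal.ofReal (ν (carlesonWindow h θ₀)).toReal :=
        (ENNReal.ofReal_toReal hfin).symm
    _ ≤ ENNReal.ofReal (ε * h) := ENNReal.ofReal_le_ofReal hT

set_option maxHeartbeats 2000000 in
private theorem shapiro_backward (ν : Measure ℂ) [IsFiniteMeasure ν]
    (hsupp : ν ((Metric.closedBall (0:ℂ) 1)ᶜ) = 0)
    (hcond : ∀ ε > 0, ∃ h₀ > 0, ∀ h : ℝ, 0 < h → h ≤ h₀ →
        ∀ θ₀ : ℝ, 0 ≤ θ₀ → θ₀ < 2 * Real.pi →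
          ν (carlesonWindow h θ₀) ≤ ENNReal.ofReal (ε * h)) :
    Filter.Tendsto
      (fun a : ℂ =>
        ∫ ξ, (1 - ‖a‖ ^ 2) / ‖(1 - (starRingEnd ℂ) a * ξ)‖ ^ 2 ∂ν)
      toBoundary (nhds 0) := by
  classical
  have hπ := Real.pi_gt_three
  rw [Metric.tendsto_nhds]
  intro ε hε
  set M := (ν Set.univ).toReal with hM
  have hM0 : 0 ≤ M := ENNReal.toReal_nonneg
  obtain ⟨h₀, hh₀pos, hbound⟩ := hcond (ε/(256*Real.pi^2)) (div_pos hε (by positivity))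
  set C : ℝ := 32*M + 64*Real.pi^3*M/h₀^3 with hC
  have hC0 : 0 ≤ C := by
    rw [hC]
    have h1 : (0:ℝ) ≤ 32*M := by linarith
    have h2 : (0:ℝ) ≤ 64*Real.pi^3*M/h₀^3 :=
      div_nonneg (mul_nonneg (by positivity) hM0) (pow_nonneg hh₀pos.le 3)
    linarith
  set δ : ℝ := min (min h₀ 1) ((ε/2)/(C+1)) with hδ
  have hδpos : 0 < δ := lt_min (lt_min hh₀pos one_pos) (div_pos (by linarith) (by linarith))
  rw [toBoundary, Filter.eventually_comap]
  refine Filter.eventually_of_mem (Ioo_mem_nhdsLT_of_mem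
    (show (1:ℝ) ∈ Set.Ioc (1-δ) 1 from ⟨by linarith, le_refl 1⟩)) ?_
  intro x hx a ha
  rw [Real.dist_0_eq_abs]
  -- basic facts about a
  set h : ℝ := 1 - x with hhdef
  have hh0 : 0 < h := by simp only [hhdef]; linarith [hx.2]
  have hhδ : h < δ := by simp only [hhdef]; linarith [hx.1]
  have hhh₀ : h ≤ h₀ := le_trans hhδ.le (le_trans (min_le_left _ _) (min_le_left _ _))
  have h1le : h ≤ 1 := le_trans hhδ.le (le_trans (min_le_left _ _) (min_le_right _ _))
  have h2kh : ∀ k : ℕ, (0:ℝ) < (2:ℝ)^k*h := fun k => mul_pos (pow_pos two_pos k) hh0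
  have hcpos : ∀ k : ℕ, (0:ℝ) < 32*Real.pi^2/(((2:ℝ)^k)^2*h) := fun k =>
    div_pos (by positivity) (mul_pos (pow_pos (pow_pos two_pos k) 2) hh0)
  have habs : ‖a‖ = 1 - h := by rw [ha, hhdef]; ring
  have hax : ‖a‖ < 1 := by rw [habs]; linarith
  have harg1 := Complex.neg_pi_lt_arg a
  have harg2 := Complex.arg_le_pi a
  set θ₀ : ℝ := if Complex.arg a < 0 then Complex.arg a + 2*Real.pi else Complex.arg a
    with hθ₀def
  have hθ₀0 : 0 ≤ θ₀ := by
    rw [hθ₀def]; split_ifs with hlt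
    · linarith
    · linarith [not_lt.1 hlt]
  have hθ₀2 : θ₀ < 2*Real.pi := by
    rw [hθ₀def]; split_ifs with hlt
    · linarith
    · linarith
  have hexpθ : Complex.exp ((θ₀:ℂ)*Complex.I) = Complex.exp ((Complex.arg a:ℂ)*Complex.I) := by
    rw [hθ₀def]
    split_ifs with hlt
    · push_cast
      rw [add_mul, Complex.exp_add,
        show ((2:ℂ)*(Real.pi:ℂ))*Complex.I = 2*(Real.pi:ℂ)*Complex.I by ring,
        Complex.exp_two_pi_mul_I, mul_one]
    · rfl
  have ha_eq : a = ((1-h:ℝ):ℂ) * Complex.exp ((θ₀:ℂ)*Complex.I) := by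
    rw [hexpθ, show ((1-h:ℝ):ℂ) = ((‖a‖ : ℝ):ℂ) by rw [habs]]
    exact (Complex.norm_mul_exp_arg_mul_I a).symm
  -- the dyadic scale N
  have hex : ∃ n : ℕ, Real.pi/2 < 2^n * h := by
    obtain ⟨n, hn⟩ := pow_unbounded_of_one_lt (Real.pi/(2*h)) (y := (2:ℝ)) one_lt_two
    refine ⟨n, ?_⟩
    rw [div_lt_iff₀ (by linarith)] at hn
    nlinarith
  set N := Nat.find hex with hNdef
  have hNspec : Real.pi/2 < 2^N * h := Nat.find_spec hex
  have hNmin : ∀ m, m < N → (2:ℝ)^m * h ≤ Real.pi/2 := fun m hm =>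
    le_of_not_gt (Nat.find_min hex hm)
  have hN1 : 1 ≤ N := by
    rcases Nat.eq_zero_or_pos N with h0 | h1
    · exfalso
      rw [h0, pow_zero, one_mul] at hNspec
      linarith
    · exact h1
  have h2N : 2^N * h ≤ Real.pi := by
    obtain ⟨m, hm⟩ : ∃ m, N = m+1 := ⟨N-1, (Nat.succ_pred_eq_of_pos hN1).symm⟩
    have hle := hNmin m (by omega)
    rw [hm, pow_succ]
    nlinarith
  -- numerator bound
  have hnum_le : 1 - ‖a‖^2 ≤ 2*h := by rw [habs]; nlinarith
  have hnum0 : 0 ≤ 1 - ‖a‖^2 := by nlinarith [norm_nonneg a]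
  have hπ0 : Real.pi ≠ 0 := by positivity
  have hne : h ≠ 0 := ne_of_gt hh0
  have hh₀ne : h₀ ≠ 0 := ne_of_gt hh₀pos
  -- the majorant g
  set P : ℂ → ℝ := fun ξ =>
    (1 - ‖a‖ ^ 2) / ‖(1 - (starRingEnd ℂ) a * ξ)‖ ^ 2 with hPdef
  set g : ℂ → ℝ := fun ξ => 32*h + ∑ k ∈ Finset.range (N+1),
      Set.indicator (carlesonWindow (2^k*h) θ₀)
        (fun _ => 32*Real.pi^2/(((2:ℝ)^k)^2*h)) ξ with hgdef
  have hgint : Integrable g ν := by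
    apply Integrable.add (integrable_const _)
    exact integrable_finset_sum _ fun k _ =>
      (integrable_const _).indicator (carlesonWindow_measurableSet _ _)
  have key_ae : ∀ᵐ ξ ∂ν, P ξ ≤ g ξ := by
    filter_upwards [ae_abs_le ν hsupp] with ξ hξ1
    by_cases hmem : ξ ∈ carlesonWindow (2^N*h) θ₀
    · have hexj : ∃ j, ξ ∈ carlesonWindow ((2:ℝ)^j*h) θ₀ := ⟨N, hmem⟩
      set j := Nat.find hexj with hjdef
      have hjmem : ξ ∈ carlesonWindow ((2:ℝ)^j*h) θ₀ := Nat.find_spec hexj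
      have hjle : j ≤ N := Nat.find_min' hexj hmem
      have hterm : (32*Real.pi^2/(((2:ℝ)^j)^2*h)) ≤ ∑ k ∈ Finset.range (N+1),
          Set.indicator (carlesonWindow (2^k*h) θ₀)
            (fun _ => 32*Real.pi^2/(((2:ℝ)^k)^2*h)) ξ := by
        have hs : Set.indicator (carlesonWindow ((2:ℝ)^j*h) θ₀)
            (fun _ => 32*Real.pi^2/(((2:ℝ)^j)^2*h)) ξ ≤ ∑ k ∈ Finset.range (N+1),
            Set.indicator (carlesonWindow (2^k*h) θ₀)
              (fun _ => 32*Real.pi^2/(((2:ℝ)^k)^2*h)) ξ :=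
          Finset.single_le_sum (f := fun k => Set.indicator (carlesonWindow (2^k*h) θ₀)
            (fun _ => 32*Real.pi^2/(((2:ℝ)^k)^2*h)) ξ)
            (fun k _ => Set.indicator_nonneg (fun _ _ => (hcpos k).le) ξ)
            (Finset.mem_range.2 (Nat.lt_succ_of_le hjle))
        rwa [Set.indicator_of_mem hjmem] at hs
      have hP_le : P ξ ≤ 32*Real.pi^2/(((2:ℝ)^j)^2*h) := by
        rcases Nat.eq_zero_or_pos j with hj0 | hjpos
        · -- j = 0 : kernel ≤ 2/h
          have hden := den_lb hax.le hξ1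
          rw [habs] at hden
          have hP2 : P ξ ≤ 2*h/h^2 := by
            apply div_le_div₀ (by linarith) hnum_le (by nlinarith)
            calc h^2 = h*h := sq h
              _ ≤ ‖(1 - (starRingEnd ℂ) a * ξ)‖^2 := by
                  nlinarith [hden, norm_nonneg (1 - (starRingEnd  ℂ) a * ξ)]
          rw [hj0]
          calc P ξ ≤ 2*h/h^2 := hP2
            _ = 2/h := by field_simp
            _ ≤ 32*Real.pi^2/(((2:ℝ)^0)^2*h) := by
                rw [pow_zero]
                apply div_le_div₀ (by positivity) (by nlinarith) (by nlinarith)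
                nlinarith
        · obtain ⟨m, hm⟩ : ∃ m, j = m+1 := ⟨j-1, (Nat.succ_pred_eq_of_pos hjpos).symm⟩
          have hnotj : ξ ∉ carlesonWindow ((2:ℝ)^m*h) θ₀ := by
            have := Nat.find_min hexj (by omega : m < j)
            exact this
          have hmN : m < N := by omega
          have hHπ : (2:ℝ)^m*h ≤ Real.pi := le_trans (hNmin m hmN) (by linarith)
          have hlow := key_lower hh0 h1le (h2kh m) hHπ hξ1 hnotj
          rw [← ha_eq] at hlow
          have hden0 : (0:ℝ) < (2:ℝ)^m*h/(2*Real.pi) := div_pos (h2kh m) (by positivity)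
          have hP2 : P ξ ≤ 2*h/((2:ℝ)^m*h/(2*Real.pi))^2 := by
            apply div_le_div₀ (by linarith) hnum_le (pow_pos hden0 2)
            exact pow_le_pow_left₀ hden0.le hlow 2
          rw [hm]
          calc P ξ ≤ 2*h/((2:ℝ)^m*h/(2*Real.pi))^2 := hP2
            _ = 32*Real.pi^2/(((2:ℝ)^(m+1))^2*h) := by
                rw [pow_succ]
                field_simp
                ring
      have h32 : (0:ℝ) ≤ 32*h := by linarith
      calc P ξ ≤ 32*Real.pi^2/(((2:ℝ)^j)^2*h) := hP_le
        _ ≤ g ξ := by show _ ≤ 32*h + _; linarith [hterm]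
    · -- outside the biggest window
      have hlow := key_lower hh0 h1le (h2kh N) h2N hξ1 hmem
      rw [← ha_eq] at hlow
      have hq : (1:ℝ)/4 ≤ (2:ℝ)^N*h/(2*Real.pi) := by
        rw [le_div_iff₀ (by positivity : (0:ℝ) < 2*Real.pi)]
        linarith
      have hden : (1:ℝ)/4 ≤ ‖(1 - (starRingEnd ℂ) a * ξ)‖ := le_trans hq hlow
      have hP2 : P ξ ≤ 2*h/((1:ℝ)/4)^2 := by
        apply div_le_div₀ (by linarith) hnum_le (by norm_num)
        exact pow_le_pow_left₀ (by norm_num) hden 2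
      have hsum0 : (0:ℝ) ≤ ∑ k ∈ Finset.range (N+1),
          Set.indicator (carlesonWindow (2^k*h) θ₀)
            (fun _ => 32*Real.pi^2/(((2:ℝ)^k)^2*h)) ξ :=
        Finset.sum_nonneg fun k _ => Set.indicator_nonneg (fun _ _ => (hcpos k).le) ξ
      have he4 : 2*h/((1:ℝ)/4)^2 = 32*h := by ring
      show P ξ ≤ 32*h + _
      linarith [hP2]
  -- integral estimates
  have hint := kernel_integrable ν hsupp hax
  have hIle : ∫ ξ, P ξ ∂ν ≤ ∫ ξ, g ξ ∂ν := integral_mono_ae hint hgint key_ae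
  have hgval : ∫ ξ, g ξ ∂ν = 32*h*M + ∑ k ∈ Finset.range (N+1),
      (ν (carlesonWindow (2^k*h) θ₀)).toReal * (32*Real.pi^2/(((2:ℝ)^k)^2*h)) := by
    show ∫ ξ, (32*h + ∑ k ∈ Finset.range (N+1),
      Set.indicator (carlesonWindow (2^k*h) θ₀)
        (fun _ => 32*Real.pi^2/(((2:ℝ)^k)^2*h)) ξ) ∂ν = _
    rw [integral_add (integrable_const _) (integrable_finset_sum _ fun k _ =>
      (integrable_const _).indicator (carlesonWindow_measurableSet _ _))]
    rw [integral_const, integral_finset_sum _ (fun k _ =>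
      (integrable_const _).indicator (carlesonWindow_measurableSet _ _))]
    congr 1
    · rw [smul_eq_mul, measureReal_def, ← hM]; ring
    · exact Finset.sum_congr rfl fun k _ => by
        rw [integral_indicator_const _ (carlesonWindow_measurableSet _ _), smul_eq_mul, measureReal_def]
  have hterm_bound : ∀ k ∈ Finset.range (N+1),
      (ν (carlesonWindow (2^k*h) θ₀)).toReal * (32*Real.pi^2/(((2:ℝ)^k)^2*h))
        ≤ 32*Real.pi^2*(ε/(256*Real.pi^2))*(1/2:ℝ)^k + 32*Real.pi^2*M*h^2/h₀^3*(2:ℝ)^k := by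
    intro k _
    have hpow : (0:ℝ) < 2^k := by positivity
    have hmeas_le : (ν (carlesonWindow ((2:ℝ)^k*h) θ₀)).toReal
        ≤ ε/(256*Real.pi^2)*((2:ℝ)^k*h) + M*((2:ℝ)^k*h)^3/h₀^3 := by
      by_cases hk : (2:ℝ)^k*h ≤ h₀
      · have hb := hbound ((2:ℝ)^k*h) (h2kh k) hk θ₀ hθ₀0 hθ₀2
        have ht := ENNReal.toReal_le_of_le_ofReal
          (mul_nonneg (div_nonneg hε.le (by positivity)) (h2kh k).le) hb
        have h2 : (0:ℝ) ≤ M*((2:ℝ)^k*h)^3/h₀^3 :=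
          div_nonneg (mul_nonneg hM0 (pow_nonneg (h2kh k).le 3)) (pow_nonneg hh₀pos.le 3)
        linarith
      · push_neg at hk
        have h1 : (ν (carlesonWindow ((2:ℝ)^k*h) θ₀)).toReal ≤ M := by
          rw [hM]
          exact ENNReal.toReal_mono (measure_ne_top ν _) (measure_mono (Set.subset_univ _))
        have h2 : M ≤ M*((2:ℝ)^k*h)^3/h₀^3 := by
          rw [le_div_iff₀ (pow_pos hh₀pos 3)]
          have h3 : h₀^3 ≤ ((2:ℝ)^k*h)^3 := pow_le_pow_left₀ hh₀pos.le hk.le 3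
          nlinarith
        have h3 : (0:ℝ) ≤ ε/(256*Real.pi^2)*((2:ℝ)^k*h) :=
          mul_nonneg (div_nonneg hε.le (by positivity)) (h2kh k).le
        linarith
    calc (ν (carlesonWindow ((2:ℝ)^k*h) θ₀)).toReal * (32*Real.pi^2/(((2:ℝ)^k)^2*h))
        ≤ (ε/(256*Real.pi^2)*((2:ℝ)^k*h) + M*((2:ℝ)^k*h)^3/h₀^3)
            * (32*Real.pi^2/(((2:ℝ)^k)^2*h)) :=
          mul_le_mul_of_nonneg_right hmeas_le (hcpos k).le
      _ = 32*Real.pi^2*(ε/(256*Real.pi^2))*(1/2:ℝ)^k + 32*Real.pi^2*M*h^2/h₀^3*(2:ℝ)^k := by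
          rw [div_pow, one_pow]
          field_simp
  have hsum1 : ∑ k ∈ Finset.range (N+1), (1/2:ℝ)^k ≤ 2 := by
    rw [geom_sum_eq (by norm_num : (1/2:ℝ) ≠ 1) (N+1)]
    have h0 : (0:ℝ) ≤ (1/2:ℝ)^(N+1) := by positivity
    have he : ((1/2:ℝ)^(N+1)-1)/(1/2-1) = 2 - 2*(1/2:ℝ)^(N+1) := by ring
    rw [he]; linarith
  have hsum2 : ∑ k ∈ Finset.range (N+1), (2:ℝ)^k ≤ 2*Real.pi/h := by
    rw [geom_sum_eq (by norm_num : (2:ℝ) ≠ 1) (N+1)]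
    have h2N' : (2:ℝ)^(N+1) ≤ 2*Real.pi/h := by
      rw [pow_succ, le_div_iff₀ hh0]
      nlinarith
    have he : ((2:ℝ)^(N+1)-1)/(2-1) = (2:ℝ)^(N+1) - 1 := by norm_num
    rw [he]; linarith
  have hA0 : (0:ℝ) ≤ 32*Real.pi^2*(ε/(256*Real.pi^2)) :=
    mul_nonneg (by positivity) (div_nonneg hε.le (by positivity))
  have hB0 : (0:ℝ) ≤ 32*Real.pi^2*M*h^2/h₀^3 :=
    div_nonneg (mul_nonneg (mul_nonneg (by positivity) hM0) (sq_nonneg h)) (pow_nonneg hh₀pos.le 3)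
  have hS : ∑ k ∈ Finset.range (N+1),
      (ν (carlesonWindow (2^k*h) θ₀)).toReal * (32*Real.pi^2/(((2:ℝ)^k)^2*h))
      ≤ ε/4 + 64*Real.pi^3*M*h/h₀^3 := by
    calc ∑ k ∈ Finset.range (N+1),
        (ν (carlesonWindow (2^k*h) θ₀)).toReal * (32*Real.pi^2/(((2:ℝ)^k)^2*h))
        ≤ ∑ k ∈ Finset.range (N+1), (32*Real.pi^2*(ε/(256*Real.pi^2))*(1/2:ℝ)^k
            + 32*Real.pi^2*M*h^2/h₀^3*(2:ℝ)^k) := Finset.sum_le_sum hterm_bound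
      _ = 32*Real.pi^2*(ε/(256*Real.pi^2)) * ∑ k ∈ Finset.range (N+1), (1/2:ℝ)^k
            + 32*Real.pi^2*M*h^2/h₀^3 * ∑ k ∈ Finset.range (N+1), (2:ℝ)^k := by
          rw [Finset.sum_add_distrib, ← Finset.mul_sum, ← Finset.mul_sum]
      _ ≤ 32*Real.pi^2*(ε/(256*Real.pi^2)) * 2
            + 32*Real.pi^2*M*h^2/h₀^3 * (2*Real.pi/h) :=
          add_le_add (mul_le_mul_of_nonneg_left hsum1 hA0)
            (mul_le_mul_of_nonneg_left hsum2 hB0)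
      _ = ε/4 + 64*Real.pi^3*M*h/h₀^3 := by
          field_simp
          ring
  -- final assembly
  have htotal : ∫ ξ, P ξ ∂ν ≤ 32*h*M + (ε/4 + 64*Real.pi^3*M*h/h₀^3) := by
    rw [hgval] at hIle
    linarith [hIle, hS]
  have hnonneg : 0 ≤ ∫ ξ, P ξ ∂ν := integral_nonneg fun ξ => kernel_nonneg hax.le ξ
  have hhC : 32*h*M + 64*Real.pi^3*M*h/h₀^3 = h*C := by rw [hC]; field_simp
  have hδle : δ ≤ (ε/2)/(C+1) := min_le_right _ _
  have hδC : δ*(C+1) ≤ ε/2 := by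
    rw [← le_div_iff₀ (by linarith : (0:ℝ) < C+1)]
    exact hδle
  have hhC2 : h*C ≤ ε/2 := by nlinarith [hhδ, hC0, hδpos]
  rw [_root_.abs_of_nonneg hnonneg]
  calc ∫ ξ, P ξ ∂ν ≤ 32*h*M + (ε/4 + 64*Real.pi^3*M*h/h₀^3) := htotal
    _ = ε/4 + h*C := by rw [← hhC]; ring
    _ ≤ ε/4 + ε/2 := by linarith
    _ < ε := by linarith

end Helpers

/-- Lemma 1.1: for a finite positive Borel measure `ν` supported in the closed unit disk,
the Poisson-type integrals `∫ (1 - |a|²)/|1 - conj(a)ξ|² dν(ξ)` tend to `0` as `|a| → 1⁻`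
if and only if `ν(S(h, θ₀)) = o(h)` uniformly in `θ₀`. -/
theorem shapiro_lemma_1_1 (ν : Measure ℂ) [IsFiniteMeasure ν]
    (hsupp : ν ((Metric.closedBall (0:ℂ) 1)ᶜ) = 0) :
    Filter.Tendsto
      (fun a : ℂ =>
        ∫ ξ, (1 - ‖a‖ ^ 2) / ‖1 - (starRingEnd ℂ) a * ξ‖ ^ 2 ∂ν)
      toBoundary (nhds 0)
    ↔ ∀ ε > 0, ∃ h₀ > 0, ∀ h : ℝ, 0 < h → h ≤ h₀ →
        ∀ θ₀ : ℝ, 0 ≤ θ₀ → θ₀ < 2 * Real.pi →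
          ν (carlesonWindow h θ₀) ≤ ENNReal.ofReal (ε * h) := by
  constructor
  · exact shapiro_forward ν hsupp
  · exact shapiro_backward ν hsupp
end

section
/- Let φ : 𝕋 → ℂ be a measurable function such that |φ(ζ)| = 1 for m-a.e. ζ ∈ 𝕋 and ∫_𝕋 φ(ζ)ⁿ dm(ζ) = 0 for every integer n ≥ 1. Then for every a ∈ 𝔻, ∫_𝕋 (1 - |a|²)/|1 - conj(a)·φ(ζ)|² dm(ζ) = 1. In particular, this integral does not tend to 0 as |a| → 1⁻. -/
open MeasureTheory Filter Metric Complex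
open scoped ENNReal NNReal

/-- The average of `f` over the unit circle `𝕋` with respect to normalized
arclength measure `m`: `∫_𝕋 f dm = (2π)⁻¹ ∫_0^{2π} f(e^{iθ}) dθ`. -/
noncomputable def circleAvg (f : ℂ → ℝ) : ℝ :=
  (2 * Real.pi)⁻¹ * ∫ θ in (0:ℝ)..(2 * Real.pi), f (Complex.exp (θ * Complex.I))

lemma kernel_eq (z : ℂ) (hz : ‖z‖ < 1) :
    (1 - ‖z‖ ^ 2) / ‖1 - z‖ ^ 2 = 1 + 2 * (z / (1 - z)).re := by
  have hz1 : (1:ℂ) - z ≠ 0 := sub_ne_zero.mpr (fun h => by simp [← h] at hz)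
  have hN : Complex.normSq (1 - z) ≠ 0 := by simpa [Complex.normSq_eq_zero] using hz1
  rw [Complex.sq_norm, Complex.sq_norm, Complex.div_re]
  simp only [Complex.normSq_apply, Complex.sub_re, Complex.sub_im, Complex.one_re,
    Complex.one_im] at *
  have hN2 : 1 - z.re * 2 + z.re ^ 2 + z.im ^ 2 ≠ 0 := by
    intro h; apply hN; nlinarith [h]
  have hcancel : (1 - z.re * 2 + z.re ^ 2 + z.im ^ 2) * (1 - z.re * 2 + z.re ^ 2 + z.im ^ 2)⁻¹ = 1 :=
    mul_inv_cancel₀ hN2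
  linear_combination hcancel

lemma tsum_pow_succ (z : ℂ) (hz : ‖z‖ < 1) :
    ∑' n : ℕ, z ^ (n+1) = z / (1 - z) := by
  have h : ∑' n : ℕ, z ^ n = (1 - z)⁻¹ :=
    tsum_geometric_of_norm_lt_one hz
  calc ∑' n : ℕ, z ^ (n+1) = ∑' n : ℕ, z * z ^ n := by
        refine tsum_congr fun n => ?_; ring
  _ = z * ∑' n : ℕ, z ^ n := tsum_mul_left
  _ = z / (1 - z) := by rw [h, div_eq_mul_inv]

theorem main_avg (φ : ℂ → ℂ)
    (hmeas : Measurable φ)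
    (hmod : ∀ᵐ (θ : ℝ) ∂(volume.restrict (Set.Ioc (0:ℝ) (2 * Real.pi))),
      ‖φ (Complex.exp (θ * Complex.I))‖ = 1)
    (hmom : ∀ n : ℕ, 1 ≤ n →
      (∫ θ in (0:ℝ)..(2 * Real.pi), (φ (Complex.exp (θ * Complex.I))) ^ n) = 0)
    (a : ℂ) (ha : a ∈ Metric.ball (0:ℂ) 1) :
    circleAvg (fun ζ =>
      (1 - ‖a‖ ^ 2) / ‖1 - (starRingEnd ℂ) a * φ ζ‖ ^ 2) = 1 := by
  have h2pi : (0:ℝ) < 2 * Real.pi := by positivity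
  set μ := volume.restrict (Set.Ioc (0:ℝ) (2 * Real.pi)) with hμ
  set F : ℝ → ℂ := fun θ => φ (Complex.exp (θ * Complex.I)) with hFdef
  have hFmeas : Measurable F :=
    hmeas.comp ((Complex.continuous_exp.comp
      (Complex.continuous_ofReal.mul continuous_const)).measurable)
  rw [mem_ball_zero_iff] at ha
  have habs : ‖a‖ < 1 := ha
  set c := (starRingEnd ℂ) a with hc
  have hcabs : ‖c‖ = ‖a‖ := Complex.norm_conj a
  have hclt : ‖c‖ < 1 := by rwa [hcabs]
  -- the complex function
  set g : ℝ → ℂ := fun θ => (c * F θ) / (1 - c * F θ) with hgdef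
  have hgmeas : Measurable g := ((hFmeas.const_mul c).div
    (measurable_const.sub (hFmeas.const_mul c)))
  -- terms measurable
  have hfmeas : ∀ n : ℕ, Measurable (fun θ => (c * F θ) ^ (n+1)) :=
    fun n => (hFmeas.const_mul c).pow_const (n+1)
  -- a.e. modulus
  have hmodF : ∀ᵐ θ ∂μ, ‖F θ‖ = 1 := hmod
  -- lintegral bound
  have hlin : ∀ n : ℕ, (∫⁻ θ, ‖(c * F θ) ^ (n+1)‖₊ ∂μ)
      = ENNReal.ofReal (‖c‖ ^ (n+1)) * ENNReal.ofReal (2 * Real.pi) := by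
    intro n
    have : ∀ᵐ θ ∂μ, (‖(c * F θ) ^ (n+1)‖₊ : ℝ≥0∞) = ENNReal.ofReal (‖c‖ ^ (n+1)) := by
      filter_upwards [hmodF] with θ h
      rw [← enorm_eq_nnnorm, ← ofReal_norm]
      congr 1
      simp [norm_pow, norm_mul, h]
    rw [lintegral_congr_ae this, lintegral_const]
    simp [hμ, Measure.restrict_apply_univ, Real.volume_Ioc]
  -- summability of lintegrals
  have hsum_ne_top : (∑' n : ℕ, ∫⁻ θ, ‖(c * F θ) ^ (n+1)‖₊ ∂μ) ≠ ⊤ := by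
    simp_rw [hlin]
    rw [ENNReal.tsum_mul_right]
    refine ENNReal.mul_ne_top ?_ ENNReal.ofReal_ne_top
    have hre : ∀ n : ℕ, ENNReal.ofReal (‖c‖ ^ (n+1)) = (ENNReal.ofReal ‖c‖) ^ (n+1) := by
      intro n; rw [ENNReal.ofReal_pow (norm_nonneg c)]
    simp_rw [hre]
    have hr : ENNReal.ofReal ‖c‖ < 1 := by
      rw [← ENNReal.ofReal_one]
      exact ENNReal.ofReal_lt_ofReal_iff_of_nonneg (norm_nonneg c) |>.mpr
        hclt
    have hlt : (∑' n : ℕ, (ENNReal.ofReal ‖c‖) ^ (n+1)) < ⊤ := by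
      calc (∑' n : ℕ, (ENNReal.ofReal ‖c‖) ^ (n+1))
          ≤ ∑' n : ℕ, (ENNReal.ofReal ‖c‖) ^ n := by
            refine ENNReal.tsum_le_tsum fun n => ?_
            exact pow_le_pow_of_le_one (zero_le) hr.le (Nat.le_succ n)
        _ = (1 - ENNReal.ofReal ‖c‖)⁻¹ := ENNReal.tsum_geometric _
        _ < ⊤ := ENNReal.inv_lt_top.2 (tsub_pos_of_lt hr)
    exact hlt.ne
  -- integral of each term is zero
  have hterm : ∀ n : ℕ, (∫ θ, (c * F θ) ^ (n+1) ∂μ) = 0 := by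
    intro n
    have h1 : (∫ θ, (c * F θ) ^ (n+1) ∂μ) = c ^ (n+1) * ∫ θ, (F θ) ^ (n+1) ∂μ := by
      simp_rw [mul_pow]
      exact integral_const_mul _ _
    have h2 : (∫ θ, (F θ) ^ (n+1) ∂μ) = 0 := by
      have := hmom (n+1) (Nat.le_add_left 1 n)
      rwa [intervalIntegral.integral_of_le h2pi.le] at this
    rw [h1, h2, mul_zero]
  -- the complex integral vanishes
  have hInt0 : (∫ θ, g θ ∂μ) = 0 := by
    have hae : g =ᵐ[μ] fun θ => ∑' n : ℕ, (c * F θ) ^ (n+1) := by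
      filter_upwards [hmodF] with θ h
      rw [hgdef]
      refine (tsum_pow_succ _ ?_).symm
      rw [norm_mul, h, mul_one]; exact hclt
    rw [integral_congr_ae hae,
      integral_tsum (fun n => (hfmeas n).aestronglyMeasurable) hsum_ne_top]
    simp [hterm]
  -- integrability of g
  have hgint : Integrable g μ := by
    refine Integrable.mono' (integrable_const (‖c‖ / (1 - ‖c‖))) hgmeas.aestronglyMeasurable ?_
    filter_upwards [hmodF] with θ h
    have habsz : ‖c * F θ‖ = ‖c‖ := by
      rw [norm_mul, h, mul_one]
    have hpos : (0:ℝ) < 1 - ‖c‖ := by linarith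
    have hden : 1 - ‖c‖ ≤ ‖1 - c * F θ‖ := by
      have h2 := norm_sub_norm_le (1:ℂ) (c * F θ)
      rw [norm_one, habsz] at h2
      exact h2
    show ‖c * F θ / (1 - c * F θ)‖ ≤ _
    rw [norm_div, habsz]
    exact div_le_div_of_nonneg_left (norm_nonneg c) hpos hden
  -- a.e. identity for the kernel
  have hker : (fun θ => (1 - ‖a‖ ^ 2) / ‖1 - c * F θ‖ ^ 2)
      =ᵐ[μ] fun θ => 1 + 2 * (g θ).re := by
    filter_upwards [hmodF] with θ h
    have habsz : ‖c * F θ‖ = ‖a‖ := by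
      rw [norm_mul, h, mul_one, hcabs]
    have hk := kernel_eq (c * F θ) (by rw [habsz]; exact habs)
    rw [habsz] at hk
    exact hk
  -- putting it together
  have hre0 : (∫ θ, (g θ).re ∂μ) = 0 := by
    have := integral_re hgint
    simp only [RCLike.re_to_complex] at this
    rw [this, hInt0, Complex.zero_re]
  rw [circleAvg, intervalIntegral.integral_of_le h2pi.le]
  rw [show (∫ θ in Set.Ioc (0:ℝ) (2*Real.pi), (1 - ‖a‖ ^ 2) /
        ‖1 - c * φ (Complex.exp (θ * Complex.I))‖ ^ 2)
      = ∫ θ, (1 + 2 * (g θ).re) ∂μ from integral_congr_ae hker]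
  have h1i : Integrable (fun _ : ℝ => (1:ℝ)) μ := integrable_const 1
  have h2i : Integrable (fun θ => 2 * (g θ).re) μ :=
    (hgint.re : Integrable (fun θ => (g θ).re) μ).const_mul 2
  rw [integral_add h1i h2i]
  have h2v : (∫ θ, (2:ℝ) * (g θ).re ∂μ) = 2 * ∫ θ, (g θ).re ∂μ := integral_const_mul 2 _
  rw [h2v, hre0, mul_zero, add_zero]
  simp only [integral_const, smul_eq_mul, mul_one]
  rw [hμ, measureReal_restrict_apply_univ, Real.volume_real_Ioc_of_le h2pi.le]
  rw [sub_zero]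
  field_simp

/-- If `φ : 𝕋 → ℂ` is measurable with `|φ| = 1` a.e. on `𝕋` and `∫_𝕋 φⁿ dm = 0` for
all `n ≥ 1`, then `∫_𝕋 (1-|a|²)/|1 - conj(a)φ(ζ)|² dm(ζ) = 1` for every `a ∈ 𝔻`;
in particular this integral does not tend to `0` as `|a| → 1⁻`. -/
theorem inner_function_poisson_integral_eq_one (φ : ℂ → ℂ)
    (hmeas : Measurable φ)
    (hmod : ∀ᵐ (θ : ℝ) ∂(volume.restrict (Set.Ioc (0:ℝ) (2 * Real.pi))),
      ‖φ (Complex.exp (θ * Complex.I))‖ = 1)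
    (hmom : ∀ n : ℕ, 1 ≤ n →
      (∫ θ in (0:ℝ)..(2 * Real.pi), (φ (Complex.exp (θ * Complex.I))) ^ n) = 0) :
    (∀ a ∈ Metric.ball (0:ℂ) 1,
        circleAvg (fun ζ =>
          (1 - ‖a‖ ^ 2) / ‖1 - (starRingEnd ℂ) a * φ ζ‖ ^ 2) = 1)
    ∧ ¬ Filter.Tendsto
        (fun a : ℂ => circleAvg (fun ζ =>
          (1 - ‖a‖ ^ 2) / ‖1 - (starRingEnd ℂ) a * φ ζ‖ ^ 2))
        toBoundary (nhds 0) := by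
  have havg := main_avg φ hmeas hmod hmom
  refine ⟨havg, ?_⟩
  intro hT
  -- toBoundary is nontrivial
  have hmapto : Filter.Tendsto (fun r : ℝ => (r : ℂ)) (nhdsWithin 1 (Set.Iio 1)) toBoundary := by
    rw [toBoundary, Filter.tendsto_comap_iff]
    have habs : ∀ r : ℝ, r ∈ Set.Ioo (0:ℝ) 1 → ‖(r:ℂ)‖ = r := by
      intro r hr
      rw [Complex.norm_real, Real.norm_eq_abs, abs_of_pos hr.1]
    refine tendsto_nhdsWithin_of_tendsto_nhds_of_eventually_within _ ?_ ?_
    · have := ((continuous_norm.comp Complex.continuous_ofReal).tendsto (1:ℝ)).mono_left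
        (nhdsWithin_le_nhds (s := Set.Iio (1:ℝ)))
      simpa using this
    · filter_upwards [Ioo_mem_nhdsLT_of_mem (by norm_num : (1:ℝ) ∈ Set.Ioc (0:ℝ) 1)] with r hr
      show ‖(r:ℂ)‖ ∈ Set.Iio 1
      rw [habs r hr]
      exact hr.2
  have hne : toBoundary.NeBot := hmapto.neBot
  -- eventually the average equals 1
  have hev : ∀ᶠ a in toBoundary, (fun a : ℂ => circleAvg (fun ζ =>
      (1 - ‖a‖ ^ 2) / ‖1 - (starRingEnd ℂ) a * φ ζ‖ ^ 2)) a = 1 := by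
    have hball : Metric.ball (0:ℂ) 1 ∈ toBoundary := by
      rw [toBoundary]
      refine Filter.mem_of_superset (Filter.preimage_mem_comap self_mem_nhdsWithin) ?_
      intro x hx
      rw [mem_ball_zero_iff]
      exact hx
    filter_upwards [hball] with a ha
    exact havg a ha
  have hT1 : Filter.Tendsto (fun a : ℂ => circleAvg (fun ζ =>
      (1 - ‖a‖ ^ 2) / ‖1 - (starRingEnd ℂ) a * φ ζ‖ ^ 2))
      toBoundary (nhds 1) :=
    Filter.Tendsto.congr' (hev.mono fun a h => h.symm) tendsto_const_nhds
  have : (0:ℝ) = 1 := tendsto_nhds_unique hT hT1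
  norm_num at this
end

section
/- Let φ : 𝕋 → ℂ be a measurable function with |φ(ζ)| ≤ 1 for m-a.e. ζ ∈ 𝕋, and suppose Σ_{n=0}^{∞} ∫_𝕋 |φ(ζ)|^{2n} dm(ζ) < ∞. Then lim_{|a|→1⁻, a ∈ 𝔻} ∫_𝕋 (1 - |a|²)/|1 - conj(a)·φ(ζ)|² dm(ζ) = 0. -/
open MeasureTheory Filter Metric Complex

/-- If `φ : 𝕋 → ℂ` is measurable with `|φ| ≤ 1` a.e. on `𝕋` and
`Σ_{n=0}^∞ ∫_𝕋 |φ|^{2n} dm < ∞`, then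
`∫_𝕋 (1-|a|²)/|1 - conj(a)φ(ζ)|² dm(ζ) → 0` as `|a| → 1⁻`. -/
theorem summable_norms_implies_vanishing_poisson_integral (φ : ℂ → ℂ)
    (hmeas : Measurable φ)
    (hmod : ∀ᵐ (θ : ℝ) ∂(volume.restrict (Set.Ioc (0:ℝ) (2 * Real.pi))),
      ‖φ (Complex.exp (θ * Complex.I))‖ ≤ 1)
    (hsum : Summable (fun n : ℕ =>
      circleAvg (fun ζ => ‖φ ζ‖ ^ (2 * n)))) :
    Filter.Tendsto
      (fun a : ℂ => circleAvg (fun ζ =>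
        (1 - ‖a‖ ^ 2) / ‖1 - (starRingEnd ℂ) a * φ ζ‖ ^ 2))
      toBoundary (nhds 0) := by
  have h2π : (0:ℝ) < 2 * Real.pi := by positivity
  set μ : Measure ℝ := volume.restrict (Set.Ioc (0:ℝ) (2 * Real.pi)) with hμdef
  haveI : IsFiniteMeasure μ := by
    constructor
    rw [hμdef, Measure.restrict_apply_univ, Real.volume_Ioc]
    exact ENNReal.ofReal_lt_top
  set t : ℝ → ℝ := fun θ => ‖φ (Complex.exp (θ * Complex.I))‖ with htdef
  have ht0 : ∀ θ, 0 ≤ t θ := fun θ => norm_nonneg _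
  have hexp : Measurable fun θ : ℝ => Complex.exp (θ * Complex.I) :=
    (Complex.continuous_exp.comp (Complex.continuous_ofReal.mul continuous_const)).measurable
  have ht_meas : Measurable t := continuous_norm.measurable.comp (hmeas.comp hexp)
  -- the ENNReal-valued series of powers
  set G : ℝ → ENNReal := fun θ => ∑' n : ℕ, ENNReal.ofReal (t θ ^ (2 * n)) with hGdef
  have hG_meas : Measurable G :=
    Measurable.ennreal_tsum fun n => (ht_meas.pow_const _).ennreal_ofReal
  have hint : ∀ n : ℕ, Integrable (fun θ => t θ ^ (2 * n)) μ := by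
    intro n
    refine ⟨(ht_meas.pow_const _).aestronglyMeasurable, ?_⟩
    apply HasFiniteIntegral.of_bounded (C := 1)
    filter_upwards [hmod] with θ hθ
    rw [Real.norm_eq_abs, _root_.abs_of_nonneg (pow_nonneg (ht0 θ) _)]
    exact pow_le_one₀ (ht0 θ) hθ
  have hsum' : Summable fun n : ℕ => ∫ θ, t θ ^ (2 * n) ∂μ := by
    refine (hsum.mul_left (2 * Real.pi)).congr fun n => ?_
    rw [circleAvg, ← mul_assoc, mul_inv_cancel₀ h2π.ne', one_mul,
      intervalIntegral.integral_of_le h2π.le]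
  have hlin : ∫⁻ θ, G θ ∂μ ≠ ⊤ := by
    rw [hGdef]
    rw [lintegral_tsum fun n => ((ht_meas.pow_const _).ennreal_ofReal).aemeasurable]
    have heq : ∀ n : ℕ, ∫⁻ θ, ENNReal.ofReal (t θ ^ (2 * n)) ∂μ
        = ENNReal.ofReal (∫ θ, t θ ^ (2 * n) ∂μ) := fun n =>
      (ofReal_integral_eq_lintegral_ofReal (hint n)
        (ae_of_all _ fun θ => pow_nonneg (ht0 θ) _)).symm
    simp_rw [heq]
    rw [← ENNReal.ofReal_tsum_of_nonneg
      (fun n => integral_nonneg fun θ => pow_nonneg (ht0 θ) _) hsum']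
    exact ENNReal.ofReal_ne_top
  have hae_fin : ∀ᵐ θ ∂μ, G θ < ⊤ := ae_lt_top hG_meas hlin
  have hlt : ∀ᵐ θ ∂μ, t θ < 1 := by
    filter_upwards [hmod, hae_fin] with θ h1 h2
    rcases lt_or_eq_of_le h1 with h | h
    · exact h
    · exfalso
      have h' : t θ = 1 := h
      rw [hGdef] at h2
      simp only [h', one_pow, ENNReal.ofReal_one] at h2
      rw [ENNReal.tsum_const_eq_top_of_ne_zero (by norm_num)] at h2
      exact absurd h2 (lt_irrefl _)
  have hGval : ∀ θ, t θ < 1 → G θ = ENNReal.ofReal (1 - t θ ^ 2)⁻¹ := by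
    intro θ hθ
    have h1 : t θ ^ 2 < 1 := by nlinarith [ht0 θ]
    have h2 : (0:ℝ) ≤ t θ ^ 2 := sq_nonneg _
    rw [hGdef]
    have hpow : ∀ n : ℕ, ENNReal.ofReal (t θ ^ (2 * n)) = ENNReal.ofReal (t θ ^ 2) ^ n := by
      intro n; rw [pow_mul, ENNReal.ofReal_pow h2]
    simp_rw [hpow]
    rw [ENNReal.tsum_geometric, ENNReal.ofReal_inv_of_pos (by linarith)]
    congr 1
    rw [ENNReal.ofReal_sub _ h2, ENNReal.ofReal_one]
  -- the dominating function
  set bnd : ℝ → ℝ := fun θ => 4 / (1 - t θ ^ 2) with hbnddef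
  have hbnd_meas : Measurable bnd :=
    measurable_const.div (measurable_const.sub (ht_meas.pow_const 2))
  have hbnd_int : Integrable bnd μ := by
    refine ⟨hbnd_meas.aestronglyMeasurable, ?_⟩
    rw [HasFiniteIntegral]
    have hcong : ∫⁻ θ, ‖bnd θ‖ₑ ∂μ = ∫⁻ θ, 4 * G θ ∂μ := by
      apply lintegral_congr_ae
      filter_upwards [hlt] with θ hθ
      have hpos : (0:ℝ) < 1 - t θ ^ 2 := by nlinarith [ht0 θ]
      have hb0 : (0:ℝ) ≤ bnd θ := by
        rw [hbnddef]; positivity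
      rw [← ofReal_norm_eq_enorm, Real.norm_eq_abs, _root_.abs_of_nonneg hb0, hGval θ hθ,
        hbnddef]
      simp only [div_eq_mul_inv]
      rw [ENNReal.ofReal_mul (by norm_num : (0:ℝ) ≤ 4)]
      norm_num
    rw [hcong, lintegral_const_mul 4 hG_meas]
    exact ENNReal.mul_lt_top (by simp) hlin.lt_top
  -- filter facts
  haveI : Filter.IsCountablyGenerated toBoundary := by
    unfold toBoundary; infer_instance
  have habs : Tendsto (fun a : ℂ => ‖a‖) toBoundary (nhdsWithin 1 (Set.Iio 1)) := by
    unfold toBoundary; exact tendsto_comap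
  have habs1 : Tendsto (fun a : ℂ => ‖a‖) toBoundary (nhds 1) :=
    habs.mono_right nhdsWithin_le_nhds
  have hev : ∀ᶠ a : ℂ in toBoundary, ‖a‖ < 1 :=
    habs.eventually eventually_mem_nhdsWithin
  have hnum : Tendsto (fun a : ℂ => 1 - ‖a‖ ^ 2) toBoundary (nhds 0) := by
    have h := (tendsto_const_nhds (x := (1:ℝ))).sub (habs1.pow 2)
    norm_num at h
    exact h
  -- lower bound on the denominator
  have hDl : ∀ (a : ℂ) (θ : ℝ),
      1 - ‖a‖ * t θ ≤ ‖1 - (starRingEnd ℂ) a * φ (Complex.exp (θ * Complex.I))‖ := by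
    intro a θ
    have h := norm_sub_norm_le (1:ℂ) ((starRingEnd ℂ) a * φ (Complex.exp (θ * Complex.I)))
    rw [norm_one, norm_mul, Complex.norm_conj] at h
    exact h
  -- main dominated convergence
  have key : Tendsto (fun a : ℂ => ∫ θ, (1 - ‖a‖ ^ 2) /
      ‖1 - (starRingEnd ℂ) a * φ (Complex.exp (θ * Complex.I))‖ ^ 2 ∂μ)
      toBoundary (nhds 0) := by
    have key' := tendsto_integral_filter_of_dominated_convergence (μ := μ) (l := toBoundary)
      (F := fun a θ => (1 - ‖a‖ ^ 2) /
        ‖1 - (starRingEnd ℂ) a * φ (Complex.exp (θ * Complex.I))‖ ^ 2)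
      (f := fun _ => (0:ℝ)) bnd ?_ ?_ hbnd_int ?_
    · simpa using key'
    · refine Eventually.of_forall fun a => ?_
      exact (measurable_const.div ((continuous_norm.measurable.comp
        (measurable_const.sub (measurable_const.mul (hmeas.comp hexp)))).pow_const
        2)).aestronglyMeasurable
    · filter_upwards [hev] with a ha
      filter_upwards [hlt] with θ hθ
      have hr0 : 0 ≤ ‖a‖ := norm_nonneg _
      have hD := hDl a θ
      have hrt : (0:ℝ) < 1 - ‖a‖ * t θ := by nlinarith [ht0 θ]
      have hDpos : (0:ℝ) < ‖1 - (starRingEnd ℂ) a * φ (Complex.exp (θ * Complex.I))‖ :=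
        lt_of_lt_of_le hrt hD
      have hD2 : (1 - ‖a‖ * t θ) ^ 2
          ≤ ‖1 - (starRingEnd ℂ) a * φ (Complex.exp (θ * Complex.I))‖ ^ 2 :=
        pow_le_pow_left₀ hrt.le hD 2
      have hF0 : (0:ℝ) ≤ (1 - ‖a‖ ^ 2) /
          ‖1 - (starRingEnd ℂ) a * φ (Complex.exp (θ * Complex.I))‖ ^ 2 :=
        div_nonneg (by nlinarith) (sq_nonneg _)
      rw [Real.norm_eq_abs, _root_.abs_of_nonneg hF0, hbnddef]
      rw [div_le_div_iff₀ (pow_pos hDpos 2) (by nlinarith [ht0 θ] : (0:ℝ) < 1 - t θ ^ 2)]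
      nlinarith [hD2, sq_nonneg (‖a‖ - t θ), sq_nonneg
        (‖1 - (starRingEnd ℂ) a * φ (Complex.exp (θ * Complex.I))‖), ht0 θ]
    · filter_upwards [hlt] with θ hθ
      have hden : (0:ℝ) < (1 - t θ) ^ 2 := pow_pos (by linarith) 2
      refine squeeze_zero' (g := fun a : ℂ => (1 - ‖a‖ ^ 2) / (1 - t θ) ^ 2) ?_ ?_ ?_
      · filter_upwards [hev] with a ha
        exact div_nonneg (by nlinarith [norm_nonneg a]) (sq_nonneg _)
      · filter_upwards [hev] with a ha
        have hr0 : 0 ≤ ‖a‖ := norm_nonneg _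
        have hD := hDl a θ
        have hD1 : 1 - t θ ≤ ‖1 - (starRingEnd ℂ) a * φ (Complex.exp (θ * Complex.I))‖ := by
          nlinarith [ht0 θ]
        have hDpos : (0:ℝ) < ‖1 - (starRingEnd ℂ) a * φ (Complex.exp (θ * Complex.I))‖ :=
          lt_of_lt_of_le (by linarith) hD1
        have hD2 : (1 - t θ) ^ 2
            ≤ ‖1 - (starRingEnd ℂ) a * φ (Complex.exp (θ * Complex.I))‖ ^ 2 :=
          pow_le_pow_left₀ (by linarith) hD1 2
        rw [div_le_div_iff₀ (pow_pos hDpos 2) hden]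
        have hnn : (0:ℝ) ≤ 1 - ‖a‖ ^ 2 := by nlinarith
        nlinarith [mul_le_mul_of_nonneg_left hD2 hnn]
      · have h := hnum.div_const ((1 - t θ) ^ 2)
        norm_num at h
        exact h
  have hfun : (fun a : ℂ => circleAvg fun ζ =>
      (1 - ‖a‖ ^ 2) / ‖1 - (starRingEnd ℂ) a * φ ζ‖ ^ 2)
      = fun a : ℂ => (2 * Real.pi)⁻¹ * ∫ θ, (1 - ‖a‖ ^ 2) /
        ‖1 - (starRingEnd ℂ) a * φ (Complex.exp (θ * Complex.I))‖ ^ 2 ∂μ := by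
    funext a
    rw [circleAvg, intervalIntegral.integral_of_le h2π.le]
  rw [hfun]
  have := key.const_mul ((2 * Real.pi)⁻¹)
  simpa using this
end
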